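/- arXiv:0806.4096 — 2 statements merged into one kernel-verified Lean document; each statement's English description precedes it below -/
import Mathlib

section
/- For every natural number n and every natural number x, the difference ∑_{k=1}^{x} k^n − (x^{n+1}/(n+1) + x^n/2) is a polynomial in x (with rational coefficients) of degree at most n−1; equivalently, (n+1)·∑_{k=1}^{x} k^n − x^{n+1} − (n+1)x^n/2 is given by a polynomial in x of degree at most n−1 with rational coefficients. -/
theorem faulhaber_tail (n : ℕ) :
    ∃ p : Polynomial ℚ, p.degree ≤ ((n - 1 : ℕ) : ℕ) ∧
      ∀ x : ℕ, ((n : ℚ) + 1) * ∑ k ∈ Finset.Icc 1 x, (k : ℚ)^n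
          - (x : ℚ)^(n+1) - ((n : ℚ) + 1) * (x : ℚ)^n / 2 = p.eval (x : ℚ) := by
  rcases Nat.eq_zero_or_pos n with hn | hn
  · subst hn
    refine ⟨Polynomial.C (-1/2 : ℚ), ?_, ?_⟩
    · simpa using Polynomial.degree_C_le
    · intro x
      simp
      norm_num
  refine ⟨∑ i ∈ Finset.Ico 2 (n+1),
      Polynomial.C (bernoulli' i * ((n+1).choose i : ℚ)) * Polynomial.X ^ (n+1-i), ?_, ?_⟩
  · refine (Polynomial.degree_sum_le _ _).trans ?_
    apply Finset.sup_le
    intro i hi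
    refine (Polynomial.degree_C_mul_X_pow_le _ _).trans ?_
    simp only [Finset.mem_Ico] at hi
    exact_mod_cast Nat.cast_le.mpr (by omega : n + 1 - i ≤ n - 1)
  · intro x
    have hIcc : Finset.Icc 1 x = Finset.Ico 1 (x+1) := by
      rw [Finset.Ico_add_one_right_eq_Icc]
    have key := sum_Ico_pow x n
    have hne : ((n : ℚ) + 1) ≠ 0 := by positivity
    rw [hIcc, key, Finset.mul_sum]
    have hterm : ∀ i ∈ Finset.range (n+1),
        ((n : ℚ) + 1) * (bernoulli' i * ((n+1).choose i) * (x : ℚ) ^ (n+1-i) / (n+1)) =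
        bernoulli' i * ((n+1).choose i) * (x : ℚ) ^ (n+1-i) := by
      intro i _
      push_cast
      field_simp
    rw [Finset.sum_congr rfl hterm]
    have hsplit : ∑ i ∈ Finset.range (n+1),
        bernoulli' i * ((n+1).choose i : ℚ) * (x : ℚ) ^ (n+1-i) =
        bernoulli' 0 * ((n+1).choose 0 : ℚ) * (x : ℚ) ^ (n+1-0)
        + bernoulli' 1 * ((n+1).choose 1 : ℚ) * (x : ℚ) ^ (n+1-1)
        + ∑ i ∈ Finset.Ico 2 (n+1),
            bernoulli' i * ((n+1).choose i : ℚ) * (x : ℚ) ^ (n+1-i) := by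
      rw [Finset.range_eq_Ico, Finset.sum_eq_sum_Ico_succ_bot (by omega),
        Finset.sum_eq_sum_Ico_succ_bot (by omega : 1 < n + 1)]
      ring
    rw [hsplit]
    simp only [bernoulli'_zero, bernoulli'_one, Nat.choose_zero_right, Nat.choose_one_right,
      Polynomial.eval_finset_sum, Polynomial.eval_mul, Polynomial.eval_C, Polynomial.eval_pow,
      Polynomial.eval_X]
    push_cast
    ring
end

section
/- The harmonic numbers minus the logarithm converge: the limit of H_x − log x as x → ∞ exists (and is the Euler–Mascheroni constant γ), where H_x = ∑_{k=1}^{x} 1/k; moreover 0.577215 < γ < 0.577216. -/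
open Filter Real Topology

lemma log_approx (x : ℝ) (hx : 64 ≤ x) :
    |Real.log (1 + 1/x) - (1/x - 1/(2*x^2) + 1/(3*x^3) - 1/(4*x^4))| ≤ 1/(x^4*(x-1)) := by
  have h0 : (0:ℝ) < x := by linarith
  have h1 : |(-(1/x) : ℝ)| < 1 := by
    rw [abs_neg, abs_of_nonneg (by positivity)]
    rw [div_lt_one h0]; linarith
  have h := Real.abs_log_sub_add_sum_range_le h1 4
  simp only [Finset.sum_range_succ, Finset.sum_range_zero] at h
  push_cast at h
  have e1 : (0 + (-(1/x)) ^ (0+1) / (0+1) + (-(1/x)) ^ (1+1) / (1+1) + (-(1/x)) ^ (2+1) / (2+1)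
        + (-(1/x)) ^ (3+1) / (3+1)) + Real.log (1 - -(1/x))
      = Real.log (1 + 1/x) - (1/x - 1/(2*x^2) + 1/(3*x^3) - 1/(4*x^4)) := by
    have : (1 : ℝ) - -(1/x) = 1 + 1/x := by ring
    rw [this]
    ring
  rw [e1] at h
  refine h.trans (le_of_eq ?_)
  rw [abs_neg, abs_of_nonneg (by positivity)]
  have hd1 : (0:ℝ) < 1 - 1/x := by
    rw [sub_pos, div_lt_one h0]; linarith
  have hd2 : (0:ℝ) < x - 1 := by linarith
  rw [div_eq_div_iff hd1.ne' (by positivity)]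
  field_simp

noncomputable def Wfun (x : ℝ) : ℝ := 1/(2*x) - 1/(12*x^2) + 1/(100*(x-1)^3)
noncomputable def Vfun (x : ℝ) : ℝ := 1/(2*x) - 1/(12*x^2) - 1/(100*(x-1)^3)

lemma step_hi (x : ℝ) (hx : 64 ≤ x) :
    Real.log (1 + 1/x) - 1/(x+1) ≤ Wfun x - Wfun (x+1) := by
  have h0 : (0:ℝ) < x := by linarith
  have h1 : (0:ℝ) < x - 1 := by linarith
  have h2 : (0:ℝ) < x + 1 := by linarith
  have hQ := (abs_le.1 (log_approx x hx)).2
  have hy : (0:ℝ) ≤ x - 64 := by linarith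
  have key : Wfun x - Wfun (x+1) - ((1/x - 1/(2*x^2) + 1/(3*x^3) - 1/(4*x^4)) - 1/(x+1) + 1/(x^4*(x-1)))
      = (-1500 + 712*x + 2088*x^2 - 324*x^3 - 964*x^4 + 36*x^5) / (1200*x^4*(x-1)^3*(x+1)^2) := by
    unfold Wfun
    have e : x + 1 - 1 = x := by ring
    rw [e]
    field_simp
    ring
  have hnum : (0:ℝ) ≤ -1500 + 712*x + 2088*x^2 - 324*x^3 - 964*x^4 + 36*x^5 := by
    have c0 := pow_nonneg hy 2
    have c1 := pow_nonneg hy 3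
    have c2 := pow_nonneg hy 4
    have c3 := pow_nonneg hy 5
    nlinarith [hy, c0, c1, c2, c3]
  have hpos : (0:ℝ) ≤ (-1500 + 712*x + 2088*x^2 - 324*x^3 - 964*x^4 + 36*x^5) / (1200*x^4*(x-1)^3*(x+1)^2) := by
    positivity
  linarith [key ▸ hpos, hQ]

lemma step_lo (x : ℝ) (hx : 64 ≤ x) :
    Vfun x - Vfun (x+1) ≤ Real.log (1 + 1/x) - 1/(x+1) := by
  have h0 : (0:ℝ) < x := by linarith
  have h1 : (0:ℝ) < x - 1 := by linarith
  have h2 : (0:ℝ) < x + 1 := by linarith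
  have hQ := (abs_le.1 (log_approx x hx)).1
  have hy : (0:ℝ) ≤ x - 64 := by linarith
  have key : ((1/x - 1/(2*x^2) + 1/(3*x^3) - 1/(4*x^4)) - 1/(x+1) - 1/(x^4*(x-1))) - (Vfun x - Vfun (x+1))
      = (-900 - 688*x + 2688*x^2 + 276*x^3 - 1364*x^4 + 36*x^5) / (1200*x^4*(x-1)^3*(x+1)^2) := by
    unfold Vfun
    have e : x + 1 - 1 = x := by ring
    rw [e]
    field_simp
    ring
  have hnum : (0:ℝ) ≤ -900 - 688*x + 2688*x^2 + 276*x^3 - 1364*x^4 + 36*x^5 := by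
    have c0 := pow_nonneg hy 2
    have c1 := pow_nonneg hy 3
    have c2 := pow_nonneg hy 4
    have c3 := pow_nonneg hy 5
    nlinarith [hy, c0, c1, c2, c3]
  have hpos : (0:ℝ) ≤ (-900 - 688*x + 2688*x^2 + 276*x^3 - 1364*x^4 + 36*x^5) / (1200*x^4*(x-1)^3*(x+1)^2) := by
    positivity
  linarith [key ▸ hpos, hQ]


noncomputable def fH (n : ℕ) : ℝ := (∑ k ∈ Finset.Icc 1 n, (1 : ℝ) / k) - Real.log n

open Filter Topology in
lemma fH_tendsto : Tendsto fH atTop (𝓝 Real.eulerMascheroniConstant) := by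
  apply Real.tendsto_harmonic_sub_log.congr
  intro n
  rw [fH, harmonic_eq_sum_Icc]
  push_cast
  simp [one_div]

lemma fH_step (k : ℕ) (hk : 1 ≤ k) :
    fH (k+1) - fH k = 1/((k:ℝ)+1) - Real.log (1 + 1/(k:ℝ)) := by
  have hk0 : (0:ℝ) < (k:ℝ) := by exact_mod_cast hk
  have hsum : (∑ j ∈ Finset.Icc 1 (k+1), (1 : ℝ) / j) = (∑ j ∈ Finset.Icc 1 k, (1 : ℝ) / j) + 1/((k:ℝ)+1) := by
    rw [Finset.sum_Icc_succ_top (by omega : 1 ≤ k + 1)]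
    push_cast
    ring
  have hlog : Real.log ((k:ℝ)+1) = Real.log (k:ℝ) + Real.log (1 + 1/(k:ℝ)) := by
    have : (1:ℝ) + 1/(k:ℝ) = ((k:ℝ)+1)/(k:ℝ) := by field_simp
    rw [this, Real.log_div (by positivity) hk0.ne']
    ring
  rw [fH, fH]
  push_cast
  rw [hsum, hlog]
  ring

lemma fH_mono (N : ℕ) (hN : 64 ≤ N) : fH 64 - Wfun ((64:ℕ):ℝ) ≤ fH N - Wfun (N:ℝ) := by
  induction N, hN using Nat.le_induction with
  | base => exact le_refl _
  | succ n hn ih =>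
    refine ih.trans ?_
    have hx : (64:ℝ) ≤ (n:ℝ) := by exact_mod_cast hn
    have h1 := step_hi (n:ℝ) hx
    have h2 := fH_step n (by omega)
    push_cast
    linarith

lemma fH_anti (N : ℕ) (hN : 64 ≤ N) : fH N - Vfun (N:ℝ) ≤ fH 64 - Vfun ((64:ℕ):ℝ) := by
  induction N, hN using Nat.le_induction with
  | base => exact le_refl _
  | succ n hn ih =>
    refine le_trans ?_ ih
    have hx : (64:ℝ) ≤ (n:ℝ) := by exact_mod_cast hn
    have h1 := step_lo (n:ℝ) hx
    have h2 := fH_step n (by omega)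
    push_cast
    linarith

open Filter Topology in
lemma Wfun_tendsto : Tendsto (fun n : ℕ => Wfun (n:ℝ)) atTop (𝓝 0) := by
  have l1 : Tendsto (fun x : ℝ => 1/(2*x)) atTop (𝓝 0) :=
    tendsto_const_nhds.div_atTop (tendsto_id.const_mul_atTop two_pos)
  have l2 : Tendsto (fun x : ℝ => 1/(12*x^2)) atTop (𝓝 0) :=
    tendsto_const_nhds.div_atTop ((tendsto_pow_atTop (n:=2) (by norm_num)).const_mul_atTop (by norm_num))
  have l3 : Tendsto (fun x : ℝ => 1/(100*(x-1)^3)) atTop (𝓝 0) := by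
    have hsub : Tendsto (fun x : ℝ => x - 1) atTop atTop :=
      tendsto_atTop_add_const_right atTop (-1) tendsto_id
    exact tendsto_const_nhds.div_atTop
      (((tendsto_pow_atTop (n:=3) (by norm_num)).comp hsub).const_mul_atTop (by norm_num))
  have := ((l1.sub l2).add l3).comp tendsto_natCast_atTop_atTop
  simp only [sub_zero, add_zero, zero_sub, zero_add] at this
  apply this.congr
  intro n
  simp [Wfun, Function.comp]

open Filter Topology in
lemma Vfun_tendsto : Tendsto (fun n : ℕ => Vfun (n:ℝ)) atTop (𝓝 0) := by
  have l1 : Tendsto (fun x : ℝ => 1/(2*x)) atTop (𝓝 0) :=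
    tendsto_const_nhds.div_atTop (tendsto_id.const_mul_atTop two_pos)
  have l2 : Tendsto (fun x : ℝ => 1/(12*x^2)) atTop (𝓝 0) :=
    tendsto_const_nhds.div_atTop ((tendsto_pow_atTop (n:=2) (by norm_num)).const_mul_atTop (by norm_num))
  have l3 : Tendsto (fun x : ℝ => 1/(100*(x-1)^3)) atTop (𝓝 0) := by
    have hsub : Tendsto (fun x : ℝ => x - 1) atTop atTop :=
      tendsto_atTop_add_const_right atTop (-1) tendsto_id
    exact tendsto_const_nhds.div_atTop
      (((tendsto_pow_atTop (n:=3) (by norm_num)).comp hsub).const_mul_atTop (by norm_num))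
  have := ((l1.sub l2).sub l3).comp tendsto_natCast_atTop_atTop
  simp only [sub_zero, add_zero, zero_sub, zero_add] at this
  apply this.congr
  intro n
  simp [Vfun, Function.comp]

set_option maxHeartbeats 2000000 in
lemma fH_sum64 : (∑ k ∈ Finset.Icc (1:ℕ) 64, (1 : ℝ) / k)
    = 623171679694215690971693339 / 131362987122535807501262400 := by
  rw [show Finset.Icc (1:ℕ) 64 = (Finset.range 65).erase 0 from by decide,
    Finset.sum_erase _ (by norm_num)]
  norm_num [Finset.sum_range_succ]

open Filter Real in
theorem euler_mascheroni_exists :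
    ∃ γ : ℝ, Tendsto (fun x : ℕ => (∑ k ∈ Finset.Icc 1 x, (1 : ℝ) / k) - Real.log x)
        atTop (nhds γ) ∧ 0.577215 < γ ∧ γ < 0.577216 := by
  have hlo : fH 64 - Wfun ((64:ℕ):ℝ) ≤ Real.eulerMascheroniConstant := by
    apply ge_of_tendsto (by simpa using fH_tendsto.sub Wfun_tendsto)
    filter_upwards [eventually_ge_atTop 64] with N hN
    exact fH_mono N hN
  have hhi : Real.eulerMascheroniConstant ≤ fH 64 - Vfun ((64:ℕ):ℝ) := by
    apply le_of_tendsto (by simpa using fH_tendsto.sub Vfun_tendsto)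
    filter_upwards [eventually_ge_atTop 64] with N hN
    exact fH_anti N hN
  have hlog64 : Real.log ((64:ℕ):ℝ) = 6 * Real.log 2 := by
    rw [show (((64:ℕ)):ℝ) = 2^6 by norm_num, Real.log_pow]
    norm_num
  have hf64 : fH 64 = 623171679694215690971693339 / 131362987122535807501262400 - 6 * Real.log 2 := by
    rw [fH, fH_sum64, hlog64]
  have hW64 : Wfun ((64:ℕ):ℝ) = 1/128 - 1/49152 + 1/25004700 := by
    norm_num [Wfun]
  have hV64 : Vfun ((64:ℕ):ℝ) = 1/128 - 1/49152 - 1/25004700 := by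
    norm_num [Vfun]
  refine ⟨Real.eulerMascheroniConstant, fH_tendsto, ?_, ?_⟩
  · have h2 := Real.log_two_lt_d9
    rw [hf64, hW64] at hlo
    norm_num at hlo ⊢
    linarith
  · have h2 := Real.log_two_gt_d9
    rw [hf64, hV64] at hhi
    norm_num at hhi ⊢
    linarith
end
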